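/- In the [4,2] self-dual Reed–Solomon QPIR example, for any Z_1, Z_2 ∈ F_4^m, any files x^i ∈ F_4^2 with codewords y^i = x^i G, and queries Q_1 = Z_1 + δ_K, Q_2 = Z_2, Q_3 = α²Z_1 + αZ_2, Q_4 = αZ_1 + α²Z_2 (where δ_K is the K-th standard basis vector of F_4^m added to server 1's query), the telescoping sum ∑_{s=1}^4 ⟨Q_s, y_{·,s}⟩ = x^K_1, where y_{·,s} = (y^1_s, …, y^m_s). -/
import Mathlib


open Matrix

/-- Telescoping sum in the `[4,2]` self-dual Reed–Solomon QPIR example: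
the sum of the four servers' inner-product responses equals `x^K_1`. -/
theorem rs42_qpir_telescoping_sum
    {F : Type*} [Field F] [CharP F 2] {m : ℕ}
    (α : F) (hα : α ^ 2 + α + 1 = 0)
    (G : Matrix (Fin 2) (Fin 4) F)
    (hG : G = !![1, 0, α ^ 2, α; 0, 1, α, α ^ 2])
    (x : Fin m → Fin 2 → F) (y : Fin m → Fin 4 → F)
    (hy : ∀ i, y i = Matrix.vecMul (x i) G)
    (Z₁ Z₂ : Fin m → F) (K : Fin m)
    (Q₁ Q₂ Q₃ Q₄ : Fin m → F)
    (hQ₁ : Q₁ = fun i => Z₁ i + if i = K then 1 else 0)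
    (hQ₂ : Q₂ = Z₂)
    (hQ₃ : Q₃ = fun i => α ^ 2 * Z₁ i + α * Z₂ i)
    (hQ₄ : Q₄ = fun i => α * Z₁ i + α ^ 2 * Z₂ i) :
    (∑ i, Q₁ i * y i 0) + (∑ i, Q₂ i * y i 1)
      + (∑ i, Q₃ i * y i 2) + (∑ i, Q₄ i * y i 3) = x K 0 := by
  have h2 : (2 : F) = 0 := by exact_mod_cast CharP.cast_eq_zero F 2
  subst hQ₁ hQ₂ hQ₃ hQ₄ hG
  simp only [hy, Matrix.vecMul, dotProduct, Fin.sum_univ_two]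
  rw [← Finset.sum_add_distrib, ← Finset.sum_add_distrib, ← Finset.sum_add_distrib]
  have key : ∀ i ∈ Finset.univ, ((Z₁ i + if i = K then 1 else 0) *
        (x i 0 * !![1, 0, α ^ 2, α; 0, 1, α, α ^ 2] 0 0 +
          x i 1 * !![1, 0, α ^ 2, α; 0, 1, α, α ^ 2] 1 0) +
      Q₂ i * (x i 0 * !![1, 0, α ^ 2, α; 0, 1, α, α ^ 2] 0 1 +
          x i 1 * !![1, 0, α ^ 2, α; 0, 1, α, α ^ 2] 1 1) +
      (α ^ 2 * Z₁ i + α * Q₂ i) *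
        (x i 0 * !![1, 0, α ^ 2, α; 0, 1, α, α ^ 2] 0 2 +
          x i 1 * !![1, 0, α ^ 2, α; 0, 1, α, α ^ 2] 1 2) +
      (α * Z₁ i + α ^ 2 * Q₂ i) *
        (x i 0 * !![1, 0, α ^ 2, α; 0, 1, α, α ^ 2] 0 3 +
          x i 1 * !![1, 0, α ^ 2, α; 0, 1, α, α ^ 2] 1 3)) =
      if i = K then x i 0 else 0 := by
    intro i _
    have e00 : (!![1, 0, α ^ 2, α; 0, 1, α, α ^ 2] : Matrix (Fin 2) (Fin 4) F) 0 0 = 1 := by simp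
    have e01 : (!![1, 0, α ^ 2, α; 0, 1, α, α ^ 2] : Matrix (Fin 2) (Fin 4) F) 0 1 = 0 := by simp
    have e02 : (!![1, 0, α ^ 2, α; 0, 1, α, α ^ 2] : Matrix (Fin 2) (Fin 4) F) 0 2 = α ^ 2 := by simp
    have e03 : (!![1, 0, α ^ 2, α; 0, 1, α, α ^ 2] : Matrix (Fin 2) (Fin 4) F) 0 3 = α := by simp
    have e10 : (!![1, 0, α ^ 2, α; 0, 1, α, α ^ 2] : Matrix (Fin 2) (Fin 4) F) 1 0 = 0 := by simp
    have e11 : (!![1, 0, α ^ 2, α; 0, 1, α, α ^ 2] : Matrix (Fin 2) (Fin 4) F) 1 1 = 1 := by simp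
    have e12 : (!![1, 0, α ^ 2, α; 0, 1, α, α ^ 2] : Matrix (Fin 2) (Fin 4) F) 1 2 = α := by simp
    have e13 : (!![1, 0, α ^ 2, α; 0, 1, α, α ^ 2] : Matrix (Fin 2) (Fin 4) F) 1 3 = α ^ 2 := by simp
    rw [e00, e01, e02, e03, e10, e11, e12, e13]
    split_ifs with h
    · linear_combination (Z₁ i * x i 0 + Q₂ i * x i 1) * (α^2 - α + 1) * hα + (Z₁ i * x i 1 + Q₂ i * x i 0) * α^3 * h2
    · linear_combination (Z₁ i * x i 0 + Q₂ i * x i 1) * (α^2 - α + 1) * hα + (Z₁ i * x i 1 + Q₂ i * x i 0) * α^3 * h2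
  rw [Finset.sum_congr rfl key]
  simp
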